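/- Let n ≥ 2, d ≥ 1, let u : [n] → ℝ^d and c ∈ ℝ^d satisfy ⟪c, u_i⟫ < ⟪c, u_j⟫ for all i < j, and set m := n − 1. For any two strongly generic ω, ω′ ∈ ℝ^d, one has A^ω = A^{ω′} if and only if π^ω ≡sylv π^{ω′}. -/

import Mathlib

open scoped RealInnerProductSpace

/-- The slope `ρ^ω(i,j)` of the edge from vertex `u i` to vertex `u j`,
with respect to the objective direction `c`. -/
noncomputable def rho {n d : ℕ} (u : Fin n → EuclideanSpace ℝ (Fin d))
    (c ω : EuclideanSpace ℝ (Fin d)) (i j : Fin n) : ℝ :=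
  ⟪ω, u j - u i⟫ / ⟪c, u j - u i⟫

/-- `τ^ω(i)`: the maximal slope from vertex `i` to a later vertex
(the supremum of the finite set of slopes `ρ^ω(i,j)` for `i < j`;
it is meaningful for non-maximal `i`, where this set is nonempty). -/
noncomputable def tau {n d : ℕ} (u : Fin n → EuclideanSpace ℝ (Fin d))
    (c ω : EuclideanSpace ℝ (Fin d)) (i : Fin n) : ℝ :=
  sSup {x : ℝ | ∃ j : Fin n, i < j ∧ x = rho u c ω i j}

/-- `ω` is generic: for each non-maximal vertex `i` there is a unique `j > i`
whose slope attains the maximal slope `τ^ω(i)`. -/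
def Generic {n d : ℕ} (u : Fin n → EuclideanSpace ℝ (Fin d))
    (c ω : EuclideanSpace ℝ (Fin d)) : Prop :=
  ∀ i : Fin n, (i : ℕ) + 1 < n →
    ∃! j : Fin n, i < j ∧ rho u c ω i j = tau u c ω i

/-- `A` is the max-slope arborescence `A^ω`: it fixes the maximal vertex, and
sends every other vertex `i` to an improving neighbour attaining `τ^ω(i)`. -/
def IsArbo {n d : ℕ} (u : Fin n → EuclideanSpace ℝ (Fin d))
    (c ω : EuclideanSpace ℝ (Fin d)) (A : Fin n → Fin n) : Prop :=
  (∀ i : Fin n, (i : ℕ) + 1 = n → A i = i) ∧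
  (∀ i : Fin n, (i : ℕ) + 1 < n →
    i < A i ∧ rho u c ω i (A i) = tau u c ω i)

/-- `ω` is strongly generic: it is generic and the slopes
`τ^ω(1), …, τ^ω(m)` at the `m` non-maximal vertices are pairwise distinct. -/
def StronglyGeneric {m d : ℕ} (u : Fin (m + 1) → EuclideanSpace ℝ (Fin d))
    (c ω : EuclideanSpace ℝ (Fin d)) : Prop :=
  Generic u c ω ∧ Function.Injective fun i : Fin m => tau u c ω i.castSucc

/-- One step of the sylvester rewriting rule on permutations of `[m]` (in
one-line notation): the letters at two consecutive positions `a, b = a+1`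
may be exchanged whenever some letter strictly between them in value appears
at an earlier position (`U j V i k W ≡ U j V k i W` for letters `i < j < k`). -/
def SylvRel (m : ℕ) (π π' : Equiv.Perm (Fin m)) : Prop :=
  ∃ a b : Fin m, (a : ℕ) + 1 = (b : ℕ) ∧ π' = π * Equiv.swap a b ∧
    ∃ e : Fin m, e < a ∧ min (π a) (π b) < π e ∧ π e < max (π a) (π b)

/-- The sylvester congruence: the equivalence relation on permutations of `[m]`
generated by the sylvester rewriting rule. -/
def Sylv (m : ℕ) : Equiv.Perm (Fin m) → Equiv.Perm (Fin m) → Prop :=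
  Relation.EqvGen (SylvRel m)

/-! ### Auxiliary development -/

/-- The combinatorial encoding of an arborescence by a permutation: `A` sends each
non-maximal vertex strictly forward, every vertex strictly between `v` and `A v`
has larger rank (`π⁻¹`), and the target has smaller rank. -/
def Encodes {m : ℕ} (π : Equiv.Perm (Fin m)) (A : Fin (m + 1) → Fin (m + 1)) : Prop :=
  ∀ v : Fin m, v.castSucc < A v.castSucc ∧
    (∀ w : Fin m, v.castSucc < w.castSucc → w.castSucc < A v.castSucc → π⁻¹ v < π⁻¹ w) ∧
    (∀ w : Fin m, A v.castSucc = w.castSucc → π⁻¹ w < π⁻¹ v)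

theorem Equiv.Perm.apply_inv_self {α : Type*} (f : Equiv.Perm α) (x : α) : f (f⁻¹ x) = x :=
  f.apply_symm_apply x

theorem Equiv.Perm.inv_apply_self {α : Type*} (f : Equiv.Perm α) (x : α) : f⁻¹ (f x) = x :=
  f.symm_apply_apply x

section Comb

variable {m : ℕ}

lemma encodes_not_lt {π : Equiv.Perm (Fin m)} {A A' : Fin (m + 1) → Fin (m + 1)}
    (h : Encodes π A) (h' : Encodes π A') (v : Fin m) :
    ¬ A v.castSucc < A' v.castSucc := by
  intro hlt
  have hne : A v.castSucc ≠ Fin.last m := (hlt.trans_le (Fin.le_last _)).ne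
  obtain ⟨w, hw⟩ := Fin.eq_castSucc_of_ne_last hne
  have h2 := (h v).2.2 w hw.symm
  have h3 := (h' v).2.1 w (hw ▸ (h v).1) (hw ▸ hlt)
  exact absurd h3 (not_lt.mpr h2.le)

lemma encodes_unique {π : Equiv.Perm (Fin m)} {A A' : Fin (m + 1) → Fin (m + 1)}
    (h : Encodes π A) (h' : Encodes π A') (v : Fin m) :
    A v.castSucc = A' v.castSucc :=
  le_antisymm (not_lt.mp (encodes_not_lt h' h v)) (not_lt.mp (encodes_not_lt h h' v))

lemma sylvRel_symm {π π' : Equiv.Perm (Fin m)} (h : SylvRel m π π') : SylvRel m π' π := by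
  obtain ⟨a, b, hab, rfl, e, he, h1, h2⟩ := h
  have hab' : a < b := by rw [Fin.lt_def]; omega
  refine ⟨a, b, hab, by rw [mul_assoc, Equiv.swap_mul_self, mul_one], e, he, ?_, ?_⟩
  · simpa [Equiv.swap_apply_left, Equiv.swap_apply_right,
      Equiv.swap_apply_of_ne_of_ne he.ne (he.trans hab').ne, min_comm] using h1
  · simpa [Equiv.swap_apply_left, Equiv.swap_apply_right,
      Equiv.swap_apply_of_ne_of_ne he.ne (he.trans hab').ne, max_comm] using h2

/-- Applying the swap of two consecutive values preserves strict order on pairs other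
than the designated one. -/
lemma swap_consec_lt {a b r s : Fin m} (hab : (a : ℕ) + 1 = (b : ℕ))
    (hrs : r < s) (hne : ¬(r = a ∧ s = b)) :
    Equiv.swap a b r < Equiv.swap a b s := by
  have hrs' : (r : ℕ) < (s : ℕ) := hrs
  rcases eq_or_ne r a with hra | hra
  · rcases eq_or_ne s b with hsb | hsb
    · exact absurd ⟨hra, hsb⟩ hne
    · have hsa : s ≠ a := by rw [← hra]; exact hrs.ne'
      rw [hra, Equiv.swap_apply_left, Equiv.swap_apply_of_ne_of_ne hsa hsb]
      have h1 := (Fin.ne_iff_vne s a).mp hsa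
      have h2 := (Fin.ne_iff_vne s b).mp hsb
      have h3 : (r : ℕ) = a := by rw [hra]
      rw [Fin.lt_def]
      omega
  · rcases eq_or_ne r b with hrb | hrb
    · have hsa : s ≠ a := by
        rw [Fin.ne_iff_vne]
        have : (r : ℕ) = b := by rw [hrb]
        omega
      have hsb : s ≠ b := by rw [← hrb]; exact hrs.ne'
      rw [hrb, Equiv.swap_apply_right, Equiv.swap_apply_of_ne_of_ne hsa hsb]
      have h1 := (Fin.ne_iff_vne s a).mp hsa
      have h2 := (Fin.ne_iff_vne s b).mp hsb
      have h3 : (r : ℕ) = b := by rw [hrb]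
      rw [Fin.lt_def]
      omega
    · rcases eq_or_ne s a with hsa | hsa
      · rw [hsa, Equiv.swap_apply_left, Equiv.swap_apply_of_ne_of_ne hra hrb]
        have h1 := (Fin.ne_iff_vne r a).mp hra
        have h2 := (Fin.ne_iff_vne r b).mp hrb
        have h3 : (s : ℕ) = a := by rw [hsa]
        rw [Fin.lt_def]
        omega
      · rcases eq_or_ne s b with hsb | hsb
        · rw [hsb, Equiv.swap_apply_right, Equiv.swap_apply_of_ne_of_ne hra hrb]
          have h1 := (Fin.ne_iff_vne r a).mp hra
          have h2 := (Fin.ne_iff_vne r b).mp hrb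
          have h3 : (s : ℕ) = b := by rw [hsb]
          rw [Fin.lt_def]
          omega
        · rw [Equiv.swap_apply_of_ne_of_ne hra hrb, Equiv.swap_apply_of_ne_of_ne hsa hsb]
          exact hrs

lemma swap_consec_lt_iff {a b r s : Fin m} (hab : (a : ℕ) + 1 = (b : ℕ))
    (hne1 : ¬(r = a ∧ s = b)) (hne2 : ¬(s = a ∧ r = b)) :
    Equiv.swap a b r < Equiv.swap a b s ↔ r < s := by
  constructor
  · intro h
    rcases lt_trichotomy r s with h' | rfl | h'
    · exact h'
    · exact absurd h (lt_irrefl _)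
    · exact absurd (swap_consec_lt hab h' hne2) (not_lt.mpr h.le)
  · exact fun h => swap_consec_lt hab h hne1

lemma inv_mul_swap {π : Equiv.Perm (Fin m)} {a b : Fin m} (x : Fin m) :
    (π * Equiv.swap a b)⁻¹ x = Equiv.swap a b (π⁻¹ x) := by
  rw [mul_inv_rev, Equiv.Perm.mul_apply, Equiv.swap_inv]

lemma encodes_sylvRel {π π' : Equiv.Perm (Fin m)} {A : Fin (m + 1) → Fin (m + 1)}
    (h : SylvRel m π π') (hE : Encodes π A) : Encodes π' A := by
  obtain ⟨a, b, hab, rfl, e, he, hmin, hmax⟩ := h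
  have hab' : a < b := by rw [Fin.lt_def]; omega
  intro v
  obtain ⟨h1, h2, h3⟩ := hE v
  refine ⟨h1, ?_, ?_⟩
  · intro w hw1 hw2
    have hlt := h2 w hw1 hw2
    rw [inv_mul_swap, inv_mul_swap]
    apply swap_consec_lt hab hlt
    rintro ⟨hva, hwb⟩
    -- then v = π a, w = π b, and the witness letter p = π e lies strictly between
    have hv : v = π a := by rw [← hva, Equiv.Perm.apply_inv_self]
    have hw : w = π b := by rw [← hwb, Equiv.Perm.apply_inv_self]
    have hvw : v < w := Fin.castSucc_lt_castSucc_iff.mp hw1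
    have hminvw : min (π a) (π b) = v := by rw [← hv, ← hw]; exact min_eq_left hvw.le
    have hmaxvw : max (π a) (π b) = w := by rw [← hv, ← hw]; exact max_eq_right hvw.le
    have hp1 : v < π e := hminvw ▸ hmin
    have hp2 : π e < w := hmaxvw ▸ hmax
    have := h2 (π e) (Fin.castSucc_lt_castSucc_iff.mpr hp1)
      ((Fin.castSucc_lt_castSucc_iff.mpr hp2).trans hw2)
    rw [Equiv.Perm.inv_apply_self, hva] at this
    exact absurd (this.trans he) (lt_irrefl _)
  · intro w hw
    have hlt := h3 w hw
    rw [inv_mul_swap, inv_mul_swap]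
    apply swap_consec_lt hab hlt
    rintro ⟨hwa, hvb⟩
    have hwv : w = π a := by rw [← hwa, Equiv.Perm.apply_inv_self]
    have hvv : v = π b := by rw [← hvb, Equiv.Perm.apply_inv_self]
    have hvw : v < w := Fin.castSucc_lt_castSucc_iff.mp (hw ▸ h1)
    have hminvw : min (π a) (π b) = v := by rw [← hwv, ← hvv]; exact min_eq_right hvw.le
    have hmaxvw : max (π a) (π b) = w := by rw [← hwv, ← hvv]; exact max_eq_left hvw.le
    have hp1 : v < π e := hminvw ▸ hmin
    have hp2 : π e < w := hmaxvw ▸ hmax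
    have := h2 (π e) (Fin.castSucc_lt_castSucc_iff.mpr hp1)
      (hw ▸ Fin.castSucc_lt_castSucc_iff.mpr hp2)
    rw [Equiv.Perm.inv_apply_self, hvb] at this
    rw [Fin.lt_def] at this he hab'
    omega

/-- The set of discordant pairs of letters between two permutations. -/
def disc (π π' : Equiv.Perm (Fin m)) : Finset (Fin m × Fin m) :=
  Finset.univ.filter fun p => π⁻¹ p.1 < π⁻¹ p.2 ∧ π'⁻¹ p.2 < π'⁻¹ p.1

lemma strictMono_of_adj {α : Type*} [Preorder α] {f : Fin m → α}
    (h : ∀ a b : Fin m, (a : ℕ) + 1 = (b : ℕ) → f a < f b) : StrictMono f := by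
  have key : ∀ k : ℕ, ∀ q r : Fin m, (q : ℕ) + k + 1 = (r : ℕ) → f q < f r := by
    intro k
    induction k with
    | zero => exact fun q r hqr => h q r (by omega)
    | succ k ih =>
      intro q r hqr
      have hrm : (r : ℕ) - 1 < m := by have := r.isLt; omega
      have h1 : f q < f ⟨(r : ℕ) - 1, hrm⟩ := ih q _ (by simp; omega)
      have h2 : f ⟨(r : ℕ) - 1, hrm⟩ < f r := h _ _ (by simp; omega)
      exact h1.trans h2
  intro q r hqr
  have hqr' : (q : ℕ) < (r : ℕ) := hqr
  exact key ((r : ℕ) - (q : ℕ) - 1) q r (by omega)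

lemma exists_adjacent_discordant {π π' : Equiv.Perm (Fin m)} (h : π ≠ π') :
    ∃ a b : Fin m, (a : ℕ) + 1 = (b : ℕ) ∧ π'⁻¹ (π b) < π'⁻¹ (π a) := by
  by_contra hcon
  push_neg at hcon
  have hmono : StrictMono fun q => π'⁻¹ (π q) := by
    apply strictMono_of_adj
    intro a b hab
    have hle := hcon a b hab
    have hne : π'⁻¹ (π a) ≠ π'⁻¹ (π b) := by
      intro heq
      have hab2 : a = b := π.injective (π'⁻¹.injective heq)
      rw [Fin.ext_iff] at hab2
      omega
    exact lt_of_le_of_ne hle hne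
  have hid : (fun q => π'⁻¹ (π q)) = id := by
    have hwf : WellFoundedLT (Fin m) := inferInstance
    apply (hmono.range_inj strictMono_id).mp
    rw [Set.range_id]
    exact Set.range_eq_univ.mpr (π'⁻¹.surjective.comp π.surjective)
  apply h
  apply Equiv.ext
  intro q
  have hq := congrFun hid q
  simp only [id] at hq
  calc π q = π' (π'⁻¹ (π q)) := (Equiv.Perm.apply_inv_self π' _).symm
    _ = π' q := by rw [hq]

lemma disc_swap {π π' : Equiv.Perm (Fin m)} {a b : Fin m} (hab : (a : ℕ) + 1 = (b : ℕ))
    (hd : π'⁻¹ (π b) < π'⁻¹ (π a)) :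
    disc (π * Equiv.swap a b) π' = (disc π π').erase (π a, π b) := by
  have hab' : a < b := by rw [Fin.lt_def]; omega
  ext ⟨x, y⟩
  simp only [disc, Finset.mem_filter, Finset.mem_univ, true_and, Finset.mem_erase,
    inv_mul_swap]
  constructor
  · rintro ⟨hxy, hxy'⟩
    have hnxy : ¬(x = π a ∧ y = π b) := by
      rintro ⟨rfl, rfl⟩
      rw [Equiv.Perm.inv_apply_self, Equiv.Perm.inv_apply_self, Equiv.swap_apply_left,
        Equiv.swap_apply_right] at hxy
      exact absurd hxy (not_lt.mpr hab'.le)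
    have hnyx : ¬(y = π a ∧ x = π b) := by
      rintro ⟨rfl, rfl⟩
      exact absurd hxy' (not_lt.mpr hd.le)
    have hnxy2 : ¬(π⁻¹ x = a ∧ π⁻¹ y = b) := by
      rintro ⟨hx, hy⟩
      exact hnxy ⟨by rw [← hx, Equiv.Perm.apply_inv_self], by rw [← hy, Equiv.Perm.apply_inv_self]⟩
    have hnyx2 : ¬(π⁻¹ y = a ∧ π⁻¹ x = b) := by
      rintro ⟨hy, hx⟩
      exact hnyx ⟨by rw [← hy, Equiv.Perm.apply_inv_self], by rw [← hx, Equiv.Perm.apply_inv_self]⟩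
    rw [swap_consec_lt_iff hab hnxy2 hnyx2] at hxy
    refine ⟨?_, hxy, hxy'⟩
    intro heq
    rw [Prod.ext_iff] at heq
    exact hnxy heq
  · rintro ⟨hne, hxy, hxy'⟩
    have hnxy2 : ¬(π⁻¹ x = a ∧ π⁻¹ y = b) := by
      rintro ⟨hx, hy⟩
      apply hne
      rw [Prod.ext_iff]
      exact ⟨by rw [← hx, Equiv.Perm.apply_inv_self], by rw [← hy, Equiv.Perm.apply_inv_self]⟩
    have hnyx2 : ¬(π⁻¹ y = a ∧ π⁻¹ x = b) := by
      rintro ⟨hy, hx⟩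
      have hx' : x = π b := by rw [← hx, Equiv.Perm.apply_inv_self]
      have hy' : y = π a := by rw [← hy, Equiv.Perm.apply_inv_self]
      rw [hx', hy'] at hxy'
      exact absurd hxy' (not_lt.mpr hd.le)
    rw [swap_consec_lt_iff hab hnxy2 hnyx2]
    exact ⟨hxy, hxy'⟩

lemma sylv_of_encodes {π π' : Equiv.Perm (Fin m)} {A : Fin (m + 1) → Fin (m + 1)}
    (hE : Encodes π A) (hE' : Encodes π' A) : Sylv m π π' := by
  suffices H : ∀ N (π : Equiv.Perm (Fin m)), Encodes π A → (disc π π').card = N →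
      Sylv m π π' from H _ π hE rfl
  intro N
  induction N using Nat.strong_induction_on with
  | _ N ih =>
    intro π hE hcard
    rcases eq_or_ne π π' with rfl | hne
    · exact Relation.EqvGen.refl π
    obtain ⟨a, b, hab, hd⟩ := exists_adjacent_discordant hne
    have hab' : a < b := by rw [Fin.lt_def]; omega
    set v := π a with hv
    set w := π b with hw
    have hrv : π⁻¹ v = a := Equiv.Perm.inv_apply_self _ _
    have hrw : π⁻¹ w = b := Equiv.Perm.inv_apply_self _ _
    have hvwne : v ≠ w := fun h => hab'.ne (π.injective h)
    -- find the sylvester witness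
    have hwitness : ∃ p : Fin m, π⁻¹ p < a ∧ min v w < p ∧ p < max v w := by
      rcases lt_or_gt_of_ne hvwne with hvw | hvw
      · -- v < w : inspect A (castSucc v)
        rcases lt_trichotomy (A v.castSucc) w.castSucc with hlt | heq | hgt
        · have hne' : A v.castSucc ≠ Fin.last m :=
            (hlt.trans_le (Fin.le_last _)).ne
          obtain ⟨t, ht⟩ := Fin.eq_castSucc_of_ne_last hne'
          have h3 := (hE v).2.2 t ht.symm
          have hvt : v < t := Fin.castSucc_lt_castSucc_iff.mp (ht ▸ (hE v).1)
          have htw : t < w := Fin.castSucc_lt_castSucc_iff.mp (ht ▸ hlt)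
          exact ⟨t, hrv ▸ h3, by rw [min_eq_left hvw.le]; exact hvt,
            by rw [max_eq_right hvw.le]; exact htw⟩
        · have h3 := (hE v).2.2 w heq
          rw [hrv, hrw] at h3
          exact absurd h3 (not_lt.mpr hab'.le)
        · have := (hE' v).2.1 w (Fin.castSucc_lt_castSucc_iff.mpr hvw) hgt
          exact absurd this (not_lt.mpr hd.le)
      · -- w < v : inspect A (castSucc w)
        rcases lt_trichotomy (A w.castSucc) v.castSucc with hlt | heq | hgt
        · have hne' : A w.castSucc ≠ Fin.last m :=
            (hlt.trans_le (Fin.le_last _)).ne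
          obtain ⟨t, ht⟩ := Fin.eq_castSucc_of_ne_last hne'
          have h3 := (hE w).2.2 t ht.symm
          rw [hrw] at h3
          have hwt : w < t := Fin.castSucc_lt_castSucc_iff.mp (ht ▸ (hE w).1)
          have htv : t < v := Fin.castSucc_lt_castSucc_iff.mp (ht ▸ hlt)
          have hta : π⁻¹ t < a := by
            have htne : t ≠ v := htv.ne
            have hta' : π⁻¹ t ≠ a := by
              intro h
              apply htne
              have h5 : π (π⁻¹ t) = π a := congrArg π h
              rw [Equiv.Perm.apply_inv_self] at h5
              exact h5.trans hv.symm
            rw [Fin.lt_def] at h3 ⊢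
            rw [Fin.ne_iff_vne] at hta'
            omega
          exact ⟨t, hta, by rw [min_eq_right hvw.le]; exact hwt,
            by rw [max_eq_left hvw.le]; exact htv⟩
        · have h3 := (hE' w).2.2 v heq
          exact absurd h3 (not_lt.mpr hd.le)
        · have := (hE w).2.1 v (Fin.castSucc_lt_castSucc_iff.mpr hvw) hgt
          rw [hrv, hrw] at this
          exact absurd this (not_lt.mpr hab'.le)
    obtain ⟨p, hp1, hp2, hp3⟩ := hwitness
    have hrel : SylvRel m π (π * Equiv.swap a b) :=
      ⟨a, b, hab, rfl, π⁻¹ p, hp1, by rw [Equiv.Perm.apply_inv_self]; exact hp2,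
        by rw [Equiv.Perm.apply_inv_self]; exact hp3⟩
    have hmem : (v, w) ∈ disc π π' := by
      simp only [disc, Finset.mem_filter, Finset.mem_univ, true_and]
      exact ⟨by rw [hrv, hrw]; exact hab', hd⟩
    have hcard' : (disc (π * Equiv.swap a b) π').card < N := by
      rw [disc_swap hab hd, ← hv, ← hw, Finset.card_erase_of_mem hmem, hcard]
      have : 0 < (disc π π').card := Finset.card_pos.mpr ⟨_, hmem⟩
      omega
    exact Relation.EqvGen.trans _ _ _ (Relation.EqvGen.rel _ _ hrel)
      (ih _ hcard' _ (encodes_sylvRel hrel hE) rfl)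

end Comb

section Analysis

variable {m d : ℕ} (u : Fin (m + 1) → EuclideanSpace ℝ (Fin d))
  (c ω : EuclideanSpace ℝ (Fin d))

lemma slope_set_bddAbove (i : Fin (m + 1)) :
    BddAbove {x : ℝ | ∃ j : Fin (m + 1), i < j ∧ x = rho u c ω i j} := by
  apply Set.Finite.bddAbove
  apply (Set.finite_range (rho u c ω i)).subset
  rintro x ⟨j, _, rfl⟩
  exact ⟨j, rfl⟩

lemma rho_le_tau {i k : Fin (m + 1)} (hk : i < k) : rho u c ω i k ≤ tau u c ω i :=
  le_csSup (slope_set_bddAbove u c ω i) ⟨k, hk, rfl⟩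

lemma rho_lt_tau {A : Fin (m + 1) → Fin (m + 1)} (hg : Generic u c ω)
    (hA : IsArbo u c ω A) {i k : Fin (m + 1)} (hi : (i : ℕ) + 1 < m + 1)
    (hk : i < k) (hne : k ≠ A i) : rho u c ω i k < tau u c ω i := by
  rcases lt_or_eq_of_le (rho_le_tau u c ω hk) with h | h
  · exact h
  · exact absurd ((hg i hi).unique ⟨hk, h⟩ ⟨(hA.2 i hi).1, (hA.2 i hi).2⟩) hne

lemma div_mid_lt {n1 n2 d1 d2 : ℝ} (hd1 : 0 < d1) (hd2 : 0 < d2)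
    (h : (n1 + n2) / (d1 + d2) < n1 / d1) : n2 / d2 < (n1 + n2) / (d1 + d2) := by
  rw [div_lt_div_iff₀ (by linarith) hd1] at h
  rw [div_lt_div_iff₀ hd2 (by linarith)]
  nlinarith

lemma div_mid_gt {n1 n2 d1 d2 : ℝ} (hd1 : 0 < d1) (hd2 : 0 < d2)
    (h : n1 / d1 < (n1 + n2) / (d1 + d2)) : (n1 + n2) / (d1 + d2) < n2 / d2 := by
  rw [div_lt_div_iff₀ hd1 (by linarith)] at h
  rw [div_lt_div_iff₀ (by linarith) hd2]
  nlinarith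

variable (hc : ∀ i j : Fin (m + 1), i < j → ⟪c, u i⟫ < ⟪c, u j⟫)
include hc

lemma Dpos {i j : Fin (m + 1)} (hij : i < j) : 0 < ⟪c, u j - u i⟫ := by
  rw [inner_sub_right]
  exact sub_pos.mpr (hc i j hij)

omit hc in
lemma inner_split (x : EuclideanSpace ℝ (Fin d)) (i k j : Fin (m + 1)) :
    ⟪x, u j - u i⟫ = ⟪x, u k - u i⟫ + ⟪x, u j - u k⟫ := by
  simp only [inner_sub_right]
  ring

/-- Three-point lemma, form 1: if `i < k < j` and `ρ(i,k) < ρ(i,j)` then `ρ(i,j) < ρ(k,j)`. -/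
lemma slope_tripleA {i k j : Fin (m + 1)} (h1 : i < k) (h2 : k < j)
    (h : rho u c ω i k < rho u c ω i j) : rho u c ω i j < rho u c ω k j := by
  have e1 := inner_split u ω i k j
  have e2 := inner_split u c i k j
  unfold rho at *
  rw [e1, e2] at h ⊢
  exact div_mid_gt (Dpos u c hc h1) (Dpos u c hc h2) h

/-- Three-point lemma, form 2: if `i < j < k` and `ρ(i,k) < ρ(i,j)` then `ρ(j,k) < ρ(i,k)`. -/
lemma slope_tripleB {i j k : Fin (m + 1)} (h1 : i < j) (h2 : j < k)
    (h : rho u c ω i k < rho u c ω i j) : rho u c ω j k < rho u c ω i k := by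
  have e1 := inner_split u ω i j k
  have e2 := inner_split u c i j k
  unfold rho at *
  rw [e1, e2] at h ⊢
  exact div_mid_lt (Dpos u c hc h1) (Dpos u c hc h2) h

lemma encodes_of_arbo {ω : EuclideanSpace ℝ (Fin d)} {A : Fin (m + 1) → Fin (m + 1)}
    {π : Equiv.Perm (Fin m)} (hω : StronglyGeneric u c ω) (hA : IsArbo u c ω A)
    (hπ : StrictMono fun q : Fin m => tau u c ω ((π q).castSucc)) :
    Encodes π A := by
  have rank_lt : ∀ x y : Fin m,
      tau u c ω x.castSucc < tau u c ω y.castSucc → π⁻¹ x < π⁻¹ y := by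
    intro x y hxy
    have := hπ.lt_iff_lt (a := π⁻¹ x) (b := π⁻¹ y)
    simp only [Equiv.Perm.apply_inv_self] at this
    exact this.mp hxy
  intro v
  have hi : ((v.castSucc : Fin (m + 1)) : ℕ) + 1 < m + 1 := by
    have := v.isLt
    simp only [Fin.coe_castSucc]
    omega
  obtain ⟨hlt, heq⟩ := hA.2 v.castSucc hi
  refine ⟨hlt, ?_, ?_⟩
  ·
    intro w hw1 hw2
    apply rank_lt
    -- want τ(v) < τ(w)
    have hr1 : rho u c ω v.castSucc w.castSucc < tau u c ω v.castSucc :=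
      rho_lt_tau u c ω hω.1 hA hi hw1 hw2.ne
    have hr2 : rho u c ω v.castSucc (A v.castSucc) = tau u c ω v.castSucc := heq
    have h3 : rho u c ω v.castSucc (A v.castSucc) < rho u c ω w.castSucc (A v.castSucc) :=
      slope_tripleA u c ω hc hw1 hw2 (by rw [hr2]; exact hr1)
    have h4 : rho u c ω w.castSucc (A v.castSucc) ≤ tau u c ω w.castSucc :=
      rho_le_tau u c ω hw2
    linarith [hr2 ▸ h3]
  · intro w hw
    apply rank_lt
    -- want τ(w) < τ(v)
    have hvw : v ≠ w := by
      intro h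
      rw [← h] at hw
      exact absurd (hw ▸ hlt) (lt_irrefl _)
    have htne : tau u c ω w.castSucc ≠ tau u c ω v.castSucc := fun h => hvw (hω.2 h).symm
    have hle : tau u c ω w.castSucc ≤ tau u c ω v.castSucc := by
      rw [tau]
      apply csSup_le
      · exact ⟨rho u c ω w.castSucc (Fin.last m), Fin.last m,
          Fin.castSucc_lt_last w, rfl⟩
      rintro x ⟨k, hk, rfl⟩
      have hjk : A v.castSucc < k := hw ▸ hk
      have hrik : rho u c ω v.castSucc k < tau u c ω v.castSucc :=
        rho_lt_tau u c ω hω.1 hA hi (hlt.trans hjk) (fun h => absurd (h ▸ hjk) (lt_irrefl _))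
      have h5 : rho u c ω (A v.castSucc) k < rho u c ω v.castSucc k :=
        slope_tripleB u c ω hc hlt hjk (by rw [heq]; exact hrik)
      rw [hw] at h5
      linarith
    exact lt_of_le_of_ne hle htne

end Analysis

/-- for strongly generic `ω, ω'`, the arborescences agree if and
only if the sorting permutations of the slope vectors are sylvester congruent. -/
theorem arbo_eq_iff_sylv (m d : ℕ) (hm : 1 ≤ m) (hd : 1 ≤ d)
    (u : Fin (m + 1) → EuclideanSpace ℝ (Fin d)) (c : EuclideanSpace ℝ (Fin d))
    (hc : ∀ i j : Fin (m + 1), i < j → ⟪c, u i⟫ < ⟪c, u j⟫)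
    (ω ω' : EuclideanSpace ℝ (Fin d))
    (hω : StronglyGeneric u c ω) (hω' : StronglyGeneric u c ω')
    (A A' : Fin (m + 1) → Fin (m + 1))
    (hA : IsArbo u c ω A) (hA' : IsArbo u c ω' A')
    (π π' : Equiv.Perm (Fin m))
    (hπ : StrictMono fun q : Fin m => tau u c ω ((π q).castSucc))
    (hπ' : StrictMono fun q : Fin m => tau u c ω' ((π' q).castSucc)) :
    A = A' ↔ Sylv m π π' := by
  have hEA : Encodes π A := encodes_of_arbo u c hc hω hA hπ
  have hEA' : Encodes π' A' := encodes_of_arbo u c hc hω' hA' hπ'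
  constructor
  · intro h
    exact sylv_of_encodes hEA (h ▸ hEA')
  · intro h
    have key : ∀ x y : Equiv.Perm (Fin m), Sylv m x y → (Encodes x A ↔ Encodes y A) := by
      intro x y hxy
      induction hxy with
      | rel x y hr => exact ⟨encodes_sylvRel hr, encodes_sylvRel (sylvRel_symm hr)⟩
      | refl x => exact Iff.rfl
      | symm x y _ ihr => exact ihr.symm
      | trans x y z _ _ ih1 ih2 => exact ih1.trans ih2
    have hEA'2 : Encodes π' A := (key π π' h).mp hEA
    funext i
    rcases eq_or_ne i (Fin.last m) with rfl | hne
    · rw [hA.1 _ (by simp), hA'.1 _ (by simp)]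
    · obtain ⟨v, rfl⟩ := Fin.eq_castSucc_of_ne_last hne
      exact encodes_unique hEA'2 hEA' v
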